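/- arXiv:2311.15255 — 2 statements merged into one kernel-verified Lean document; each statement's English description precedes it below -/
import Mathlib

section
/- Let m < n be positive integers, F a finite field, D_k = D_k(a_1,…,a_{n−1}) for some 1 ≤ k ≤ n and a_1,…,a_{n−1} ∈ F, and let A be an element of a maximal independent set of the unitary Cayley graph Γ(M_n(F)) that contains the set 𝒟 = { D_l(b_1,…,b_{n−1}) : 1 ≤ l ≤ n, b_1,…,b_{n−1} ∈ F }. Then for any set S of m row indices, the n×n matrix whose rows indexed by S are the corresponding rows of D_k and whose remaining rows are the corresponding rows of A is not invertible. -/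
open Pointwise

/-- The unitary Cayley graph of a ring `R`: vertices are elements of `R`,
and `x`, `y` are adjacent iff `x - y` is a unit. -/
def unitaryCayley (R : Type*) [Ring R] : SimpleGraph R where
  Adj x y := x ≠ y ∧ IsUnit (x - y)
  symm := by
    refine ⟨?_⟩
    rintro x y ⟨hne, hu⟩
    exact ⟨hne.symm, by simpa [neg_sub] using hu.neg⟩
  loopless := by refine ⟨?_⟩; rintro x ⟨h, -⟩; exact h rfl

/-- A set of vertices is independent if its elements are pairwise nonadjacent. -/
def IsIndepSet {V : Type*} (G : SimpleGraph V) (A : Set V) : Prop :=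
  A.Pairwise fun x y => ¬ G.Adj x y

/-- A maximal independent set. -/
def IsMaxIndepSet {V : Type*} (G : SimpleGraph V) (A : Set V) : Prop :=
  IsIndepSet G A ∧ ∀ B : Set V, IsIndepSet G B → A ⊆ B → A = B

/-- A graph is well-covered if all its maximal independent sets have the same cardinality. -/
def WellCovered {V : Type*} (G : SimpleGraph V) : Prop :=
  ∀ A B : Set V, IsMaxIndepSet G A → IsMaxIndepSet G B → A.ncard = B.ncard

/-- The reduced `k`-diagonal matrix `D_k(a)`:  the `(i, j)` entry is `a (i - k)`
when `j = i + k` (mod `n`) and `i ≠ k`, and `0` otherwise. -/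
def Dmat {n : ℕ} (F : Type*) [Field F] (k : Fin n) (a : Fin n → F) :
    Matrix (Fin n) (Fin n) F :=
  Matrix.of fun i j => if i ≠ k ∧ j = i + k then a (i - k) else 0

/-- The family `𝒟` of all reduced diagonal matrices `D_k(a₁, …, a_{n-1})`. -/
def DSet {n : ℕ} (F : Type*) [Field F] : Set (Matrix (Fin n) (Fin n) F) :=
  {M | ∃ (k : Fin n) (a : Fin n → F), M = Dmat F k a}

/-- The Jacobson radical of a (possibly noncommutative) ring, as a two-sided ideal. -/
noncomputable def jacRad (R : Type*) [Ring R] : TwoSidedIdeal R :=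
  (⊥ : TwoSidedIdeal R).jacobson

/-- The quotient of `R` by its Jacobson radical. -/
abbrev JacQuot (R : Type*) [Ring R] := (jacRad R).ringCon.Quotient

/-- The quotient map `R → R/J(R)`. -/
noncomputable def jacMk (R : Type*) [Ring R] : R →+* JacQuot R := (jacRad R).ringCon.mk'

theorem stmt4 (F : Type*) [Field F] [Fintype F] (m n : ℕ) (hm : 0 < m) (hmn : m < n)
    (k : Fin n) (a : Fin n → F)
    (M : Set (Matrix (Fin n) (Fin n) F))
    (hM : IsMaxIndepSet (unitaryCayley (Matrix (Fin n) (Fin n) F)) M)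
    (hD : DSet F ⊆ M)
    (A : Matrix (Fin n) (Fin n) F) (hA : A ∈ M)
    (S : Finset (Fin n)) (hS : S.card = m) :
    ¬ IsUnit (Matrix.of fun i j => if i ∈ S then Dmat F k a i j else A i j) := by
  have hn : 0 < n := lt_trans hm hmn
  haveI : NeZero n := ⟨hn.ne'⟩
  rw [Matrix.isUnit_iff_isUnit_det, isUnit_iff_ne_zero, not_not]
  by_cases hkS : k ∈ S
  · apply Matrix.det_eq_zero_of_row_eq_zero k
    intro j
    simp [hkS, Dmat]
  · -- A is not adjacent to any `Dmat F k c`, so `A - Dmat F k c` is singular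
    have hsing : ∀ c : Fin n → F, (A - Dmat F k c).det = 0 := by
      intro c
      have hDc : Dmat F k c ∈ M := hD ⟨k, c, rfl⟩
      by_cases h : A = Dmat F k c
      · simp [h]
      · have hadj := hM.1 hA hDc h
        have h2 : ¬ IsUnit (A - Dmat F k c) := fun hu => hadj ⟨h, hu⟩
        rw [Matrix.isUnit_iff_isUnit_det, isUnit_iff_ne_zero, not_not] at h2
        exact h2
    have key : ∀ T : Finset (Fin n), k ∉ T → ∀ c : Fin n → F,
        (Matrix.of fun i j =>
          if i ∈ T then Dmat F k a i j else (A - Dmat F k c) i j).det = 0 := by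
      intro T
      induction T using Finset.induction_on with
      | empty =>
        intro _ c
        have : (Matrix.of fun i j =>
            if i ∈ (∅ : Finset (Fin n)) then Dmat F k a i j else (A - Dmat F k c) i j)
            = A - Dmat F k c := by
          ext i j; simp
        rw [this]; exact hsing c
      | @insert i T' hi ih =>
        intro hk c
        have hik : i ≠ k := fun h => hk (h ▸ Finset.mem_insert_self i T')
        have hkT' : k ∉ T' := fun h => hk (Finset.mem_insert_of_mem h)
        set M0 : Matrix (Fin n) (Fin n) F :=
          Matrix.of fun i' j => if i' ∈ T' then Dmat F k a i' j else (A - Dmat F k c) i' j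
          with hM0
        set e : Fin n → F := fun j => if j = i + k then (1 : F) else 0 with he
        -- for every t, replacing row i by `A i - t • e` keeps determinant zero
        have h1 : ∀ t : F,
            (M0.updateRow i (fun j => A i j - t * e j)).det = 0 := by
          intro t
          have heq : M0.updateRow i (fun j => A i j - t * e j)
              = Matrix.of fun i' j => if i' ∈ T' then Dmat F k a i' j
                  else (A - Dmat F k (Function.update c (i - k) t)) i' j := by
            ext i' j
            rw [Matrix.updateRow_apply]
            by_cases hii : i' = i
            · subst hii
              simp only [if_pos rfl, hM0]
              have : i' ∉ T' := hi
              simp only [Matrix.of_apply, if_neg this, Matrix.sub_apply, Dmat,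
                Matrix.of_apply, ne_eq]
              by_cases hj : j = i' + k
              · simp [hj, hik, Function.update_self, he]
              · simp [hj, he]
            · simp only [if_neg hii, hM0, Matrix.of_apply]
              by_cases hT : i' ∈ T'
              · simp [hT]
              · simp only [if_neg hT, Matrix.sub_apply, Dmat, Matrix.of_apply, ne_eq]
                have hne : i' - k ≠ i - k := fun h => hii (by
                  have := sub_left_inj.mp h
                  exact this)
                rw [Function.update_of_ne hne]
          rw [heq]
          exact ih hkT' (Function.update c (i - k) t)
        -- determinant is affine in t; extract the coefficient
        have hA0 : (M0.updateRow i (fun j => A i j)).det = 0 := by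
          have := h1 0
          simpa using this
        have hE : (M0.updateRow i e).det = 0 := by
          have h1' := h1 1
          have hsplit : (fun j => A i j - 1 * e j) = (fun j => A i j) + (-1 : F) • e := by
            funext j; simp [sub_eq_add_neg]
          rw [hsplit, Matrix.det_updateRow_add, Matrix.det_updateRow_smul, hA0] at h1'
          simpa using h1'
        -- scale row by `a (i - k)`
        have hDrow : (M0.updateRow i (fun j => Dmat F k a i j)).det = 0 := by
          have hrow : (fun j => Dmat F k a i j) = a (i - k) • e := by
            funext j
            simp only [Dmat, Matrix.of_apply, ne_eq, Pi.smul_apply, smul_eq_mul, he]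
            by_cases hj : j = i + k
            · simp [hj, hik]
            · simp [hj]
          rw [hrow, Matrix.det_updateRow_smul, hE, mul_zero]
        have hfinal : (Matrix.of fun i' j => if i' ∈ insert i T' then Dmat F k a i' j
            else (A - Dmat F k c) i' j) = M0.updateRow i (fun j => Dmat F k a i j) := by
          ext i' j
          rw [Matrix.updateRow_apply]
          by_cases hii : i' = i
          · subst hii; simp
          · simp [hii, hM0, Finset.mem_insert]
        rw [hfinal]
        exact hDrow
    have := key S hkS 0
    have heq : (Matrix.of fun i j => if i ∈ S then Dmat F k a i j else A i j)
        = Matrix.of fun i j => if i ∈ S then Dmat F k a i j else (A - Dmat F k 0) i j := by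
      ext i j
      by_cases h : i ∈ S <;> simp [h, Dmat]
    rw [heq]
    exact this
end

section
/- Let F be a finite field, n > 1 an integer, and A a nonzero matrix in M_n(F). Then there exists a non-invertible matrix B ∈ M_n(F) such that A − B is invertible. -/
open Pointwise

theorem stmt10 (F : Type*) [Field F] [Fintype F] (n : ℕ) (hn : 1 < n)
    (A : Matrix (Fin n) (Fin n) F) (hA : A ≠ 0) :
    ∃ B : Matrix (Fin n) (Fin n) F, ¬ IsUnit B ∧ IsUnit (A - B) := by
  obtain ⟨L, L', d, hd⟩ := Matrix.Pivot.exists_list_transvec_mul_diagonal_mul_list_transvec A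
  set P := (L.map Matrix.TransvectionStruct.toMatrix).prod with hP
  set Q := (L'.map Matrix.TransvectionStruct.toMatrix).prod with hQ
  classical
  have detP : P.det = 1 := Matrix.TransvectionStruct.det_toMatrix_prod L
  have detQ : Q.det = 1 := Matrix.TransvectionStruct.det_toMatrix_prod L'
  set e : Fin n → F := fun i => if d i = 0 then 1 else d i with he
  have heu : ∀ i, e i ≠ 0 := by
    intro i
    by_cases h : d i = 0 <;> simp [he, h]
  have hdi : ∃ i, d i ≠ 0 := by
    by_contra h
    push_neg at h
    apply hA
    have : (Matrix.diagonal d : Matrix (Fin n) (Fin n) F) = 0 := by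
      ext i j
      by_cases hij : i = j <;> simp [Matrix.diagonal, hij, h]
    rw [hd, this, Matrix.mul_zero, Matrix.zero_mul]
  obtain ⟨i0, hi0⟩ := hdi
  refine ⟨P * Matrix.diagonal (d - e) * Q, ?_, ?_⟩
  · rw [Matrix.isUnit_iff_isUnit_det]
    have : (P * Matrix.diagonal (d - e) * Q).det = 0 := by
      rw [Matrix.det_mul, Matrix.det_mul, Matrix.det_diagonal]
      have : (d - e) i0 = 0 := by simp [he, hi0]
      rw [Finset.prod_eq_zero (Finset.mem_univ i0) this]
      ring
    rw [this]
    exact not_isUnit_zero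
  · have : A - P * Matrix.diagonal (d - e) * Q = P * Matrix.diagonal e * Q := by
      rw [hd]
      have : Matrix.diagonal (d - e) = Matrix.diagonal d - Matrix.diagonal e := by
        rw [Matrix.diagonal_sub d e]; rfl
      rw [this, Matrix.mul_sub, Matrix.sub_mul]
      abel
    rw [this, Matrix.isUnit_iff_isUnit_det, Matrix.det_mul, Matrix.det_mul,
      Matrix.det_diagonal, detP, detQ]
    refine isUnit_of_mul_isUnit_left (y := 1) ?_
    simp only [one_mul, mul_one]
    exact (Finset.prod_ne_zero_iff.mpr fun i _ => heu i).isUnit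
end
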